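/- Let n ≥ 3 and let A be a primitive (0,1) companion matrix of order n with zero trace, with distinct elementary cycle lengths ℓ_1 < ... < ℓ_z in D(A). If the interval [2, m(V_1)+1] is contained in V_1 = {i : a_{n,i} = 0}, then exp(A) = n + F(ℓ_1,...,ℓ_z) + m(V_1). -/

import Mathlib

open Matrix BigOperators

/-- A nonnegative square matrix is primitive if some positive power has all entries positive. -/
def IsPrimitive {n : ℕ} (A : Matrix (Fin n) (Fin n) ℝ) : Prop :=
  ∃ m : ℕ, 0 < m ∧ ∀ i j, 0 < (A ^ m) i j

/-- The exponent of a primitive matrix: the least positive `m` with `A ^ m > 0`. -/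
noncomputable def matExp {n : ℕ} (A : Matrix (Fin n) (Fin n) ℝ) : ℕ :=
  sInf {m : ℕ | 0 < m ∧ ∀ i j, 0 < (A ^ m) i j}

/-- `(0,1)` companion matrix: superdiagonal ones on the first `n-1` rows,
arbitrary `(0,1)` last row, all other entries zero. -/
def IsCompanion {n : ℕ} (A : Matrix (Fin n) (Fin n) ℝ) : Prop :=
  (∀ i j, A i j = 0 ∨ A i j = 1) ∧
  (∀ i j : Fin n, (i : ℕ) + 1 < n → (A i j = 1 ↔ (j : ℕ) = (i : ℕ) + 1))

/-- `exp(A:i,j)`: least positive `k` such that `(A^l) i j > 0` for all `l ≥ k`. -/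
noncomputable def expIJ {n : ℕ} (A : Matrix (Fin n) (Fin n) ℝ) (i j : Fin n) : ℕ :=
  sInf {k : ℕ | 0 < k ∧ ∀ l, k ≤ l → 0 < (A ^ l) i j}

/-- `exp(A:i)`: least positive `p` such that every entry of row `i` of `A ^ p` is positive. -/
noncomputable def expRow {n : ℕ} (A : Matrix (Fin n) (Fin n) ℝ) (i : Fin n) : ℕ :=
  sInf {p : ℕ | 0 < p ∧ ∀ j, 0 < (A ^ p) i j}

/-- The digraph of `A` has an elementary cycle of length `k`. -/
def HasElemCycle {n : ℕ} (A : Matrix (Fin n) (Fin n) ℝ) (k : ℕ) : Prop :=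
  0 < k ∧ ∃ c : ℕ → Fin n, c k = c 0 ∧
    (∀ i j, i < k → j < k → c i = c j → i = j) ∧
    ∀ i < k, A (c i) (c (i + 1)) = 1

/-- `m(U)`: the maximal length of a run of consecutive integers contained in `U`. -/
noncomputable def runMax (U : Set ℕ) : ℕ :=
  sSup {k : ℕ | ∃ a : ℕ, ∀ t < k, a + t ∈ U}

/-- The Frobenius number of a set `L`: the least `N` such that every `m ≥ N` is a
nonnegative integer combination of elements of `L`. -/
noncomputable def frobNum (L : Set ℕ) : ℕ :=
  sInf {N : ℕ | ∀ m, N ≤ m → m ∈ AddSubmonoid.closure L}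

/-- Irreducibility: for all `i j` there is a walk of some positive length from `i` to `j`. -/
def IsIrreducibleMat {n : ℕ} (A : Matrix (Fin n) (Fin n) ℝ) : Prop :=
  ∀ i j, ∃ k : ℕ, 0 < k ∧ 0 < (A ^ k) i j
namespace Stmt15Aux

variable {n : ℕ}

/-- Walks of length `k` from `i` to `j` in the digraph of `A`. -/
def W (A : Matrix (Fin n) (Fin n) ℝ) (k : ℕ) (i j : Fin n) : Prop :=
  ∃ c : ℕ → Fin n, c 0 = i ∧ c k = j ∧ ∀ t < k, A (c t) (c (t + 1)) = 1

lemma entry_nonneg {A : Matrix (Fin n) (Fin n) ℝ}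
    (h01 : ∀ i j, A i j = 0 ∨ A i j = 1) (i j : Fin n) : 0 ≤ A i j := by
  rcases h01 i j with h | h <;> simp [h]

lemma pow_entry_nonneg {A : Matrix (Fin n) (Fin n) ℝ}
    (h01 : ∀ i j, A i j = 0 ∨ A i j = 1) : ∀ k (i j : Fin n), 0 ≤ (A ^ k) i j := by
  intro k
  induction k with
  | zero => intro i j; rw [pow_zero, Matrix.one_apply]; positivity
  | succ k ih =>
      intro i j
      rw [pow_succ, Matrix.mul_apply]
      exact Finset.sum_nonneg fun t _ => mul_nonneg (ih i t) (entry_nonneg h01 t j)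

lemma W_zero {A : Matrix (Fin n) (Fin n) ℝ} {i j : Fin n} : W A 0 i j ↔ i = j := by
  constructor
  · rintro ⟨c, h0, hk, _⟩; rw [← h0, hk]
  · rintro rfl; exact ⟨fun _ => i, rfl, rfl, fun t ht => by omega⟩

lemma W_succ_right {A : Matrix (Fin n) (Fin n) ℝ} {k : ℕ} {i j : Fin n} :
    W A (k + 1) i j ↔ ∃ t : Fin n, W A k i t ∧ A t j = 1 := by
  constructor
  · rintro ⟨c, h0, hk, he⟩
    exact ⟨c k, ⟨c, h0, rfl, fun t ht => he t (by omega)⟩, hk ▸ he k (by omega)⟩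
  · rintro ⟨t, ⟨c, h0, hk, he⟩, hedge⟩
    refine ⟨fun s => if s = k + 1 then j else c s, by simp [h0], by simp, ?_⟩
    intro s hs
    rcases Nat.lt_or_ge s k with h | h
    · simpa [Nat.ne_of_lt (by omega : s < k+1), Nat.ne_of_lt (by omega : s + 1 < k+1), Nat.ne_of_lt (by omega : s < k)] using he s h
    · have hsk : s = k := by omega
      subst hsk
      simpa [Nat.ne_of_lt (by omega : s < s + 1), hk] using hedge

lemma W_succ_left {A : Matrix (Fin n) (Fin n) ℝ} {k : ℕ} {i j : Fin n} :
    W A (k + 1) i j ↔ ∃ t : Fin n, A i t = 1 ∧ W A k t j := by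
  constructor
  · rintro ⟨c, h0, hk, he⟩
    exact ⟨c 1, h0 ▸ he 0 (by omega), ⟨fun s => c (s + 1), rfl, hk, fun t ht => he (t + 1) (by omega)⟩⟩
  · rintro ⟨t, hedge, ⟨c, h0, hk, he⟩⟩
    refine ⟨fun s => if s = 0 then i else c (s - 1), by simp, by simp [hk], ?_⟩
    intro s hs
    cases s with
    | zero => simpa [h0] using hedge
    | succ s => simpa using he s (by omega)

lemma W_add {A : Matrix (Fin n) (Fin n) ℝ} {a b : ℕ} {i j : Fin n} :
    W A (a + b) i j ↔ ∃ t : Fin n, W A a i t ∧ W A b t j := by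
  induction b generalizing j with
  | zero =>
      simp only [Nat.add_zero]
      constructor
      · intro h; exact ⟨j, h, W_zero.mpr rfl⟩
      · rintro ⟨t, h1, h2⟩; rwa [← W_zero.mp h2]
  | succ b ih =>
      rw [show a + (b + 1) = (a + b) + 1 from rfl, W_succ_right]
      constructor
      · rintro ⟨t, hw, he⟩
        obtain ⟨u, h1, h2⟩ := ih.mp hw
        exact ⟨u, h1, W_succ_right.mpr ⟨t, h2, he⟩⟩
      · rintro ⟨u, h1, h2⟩
        obtain ⟨t, h3, h4⟩ := W_succ_right.mp h2
        exact ⟨t, ih.mpr ⟨u, h1, h3⟩, h4⟩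

lemma pow_pos_iff_W {A : Matrix (Fin n) (Fin n) ℝ}
    (h01 : ∀ i j, A i j = 0 ∨ A i j = 1) :
    ∀ k (i j : Fin n), 0 < (A ^ k) i j ↔ W A k i j := by
  intro k
  induction k with
  | zero =>
      intro i j
      rw [pow_zero, Matrix.one_apply, W_zero]
      constructor
      · intro h; by_contra hc; simp [hc] at h
      · intro h; simp [h]
  | succ k ih =>
      intro i j
      rw [pow_succ, Matrix.mul_apply, W_succ_right]
      constructor
      · intro h
        have : ∃ t ∈ Finset.univ, 0 < (A ^ k) i t * A t j := by
          by_contra hc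
          push_neg at hc
          exact absurd (Finset.sum_nonpos fun t ht => hc t ht) (by exact not_le.mpr h)
        obtain ⟨t, _, ht⟩ := this
        rcases h01 t j with h0 | h0
        · rw [h0, mul_zero] at ht; exact absurd ht (lt_irrefl 0)
        · exact ⟨t, (ih i t).mp (by nlinarith [entry_nonneg h01 t j]), h0⟩
      · rintro ⟨t, hw, he⟩
        have h1 : 0 < (A ^ k) i t * A t j := by
          rw [he, mul_one]; exact (ih i t).mpr hw
        exact Finset.sum_pos' (fun u _ => mul_nonneg (pow_entry_nonneg h01 k i u) (entry_nonneg h01 u j)) ⟨t, Finset.mem_univ t, h1⟩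

end Stmt15Aux
namespace Stmt15Aux

variable {n : ℕ}

lemma W_step {A : Matrix (Fin n) (Fin n) ℝ} (hA : IsCompanion A)
    {i : Fin n} (h : (i : ℕ) + 1 < n) {k : ℕ} {j : Fin n} :
    W A (k + 1) i j ↔ W A k ⟨(i : ℕ) + 1, h⟩ j := by
  rw [W_succ_left]
  constructor
  · rintro ⟨t, he, hw⟩
    have : (t : ℕ) = (i : ℕ) + 1 := (hA.2 i t h).mp he
    have : t = ⟨(i : ℕ) + 1, h⟩ := Fin.ext this
    rwa [← this]
  · intro hw
    exact ⟨⟨(i : ℕ) + 1, h⟩, (hA.2 i _ h).mpr rfl, hw⟩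

lemma W_down {A : Matrix (Fin n) (Fin n) ℝ} (hA : IsCompanion A) :
    ∀ k (i j : Fin n), (i : ℕ) + k ≤ n - 1 → (W A k i j ↔ (j : ℕ) = (i : ℕ) + k) := by
  intro k
  induction k with
  | zero =>
      intro i j _
      rw [W_zero]
      exact ⟨fun h => by rw [← h]; omega, fun h => Fin.ext (by omega)⟩
  | succ k ih =>
      intro i j hle
      have hi := i.isLt
      have h1 : (i : ℕ) + 1 < n := by omega
      rw [W_step hA h1, ih ⟨(i : ℕ) + 1, h1⟩ j (by simpa using by omega)]
      simp; omega

lemma W_chain {A : Matrix (Fin n) (Fin n) ℝ} (hA : IsCompanion A) (hn : 0 < n) :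
    ∀ d k (i j : Fin n), (i : ℕ) + d = n - 1 →
      (W A (k + d) i j ↔ W A k ⟨n - 1, by omega⟩ j) := by
  intro d
  induction d with
  | zero =>
      intro k i j hi
      have : i = ⟨n - 1, by omega⟩ := Fin.ext (by simpa using hi)
      rw [Nat.add_zero, this]
  | succ d ih =>
      intro k i j hi
      have hlt := i.isLt
      have h1 : (i : ℕ) + 1 < n := by omega
      rw [show k + (d + 1) = (k + d) + 1 from rfl, W_step hA h1,
        ih k ⟨(i : ℕ) + 1, h1⟩ j (by simp; omega)]

end Stmt15Aux
namespace Stmt15Aux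

variable {n : ℕ}

/-- The set of elementary cycle lengths, described explicitly. -/
def Lset (A : Matrix (Fin n) (Fin n) ℝ) (N : Fin n) : Set ℕ :=
  {k | ∃ c : Fin n, A N c = 1 ∧ k = n - (c : ℕ)}

lemma mem_closedWalk {A : Matrix (Fin n) (Fin n) ℝ} (hA : IsCompanion A)
    {N : Fin n} (hN : (N : ℕ) = n - 1) {l : ℕ}
    (hl : l ∈ AddSubmonoid.closure (Lset A N)) : W A l N N := by
  have hn : 0 < n := N.pos
  induction hl using AddSubmonoid.closure_induction with
  | mem x hx =>
      obtain ⟨c, hc, rfl⟩ := hx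
      have hc1 : (c : ℕ) ≤ n - 1 := by have := c.isLt; omega
      rcases eq_or_lt_of_le hc1 with heq | hlt
      · -- c = N, loop of length 1
        have hcN : c = N := Fin.ext (by omega)
        have : n - (c : ℕ) = 0 + 1 := by omega
        rw [this, W_succ_left]
        exact ⟨c, hc, by rw [hcN]; exact W_zero.mpr rfl⟩
      · have : n - (c : ℕ) = (n - 1 - (c : ℕ)) + 1 := by omega
        rw [this, W_succ_left]
        refine ⟨c, hc, ?_⟩
        have := (W_chain hA hn (n - 1 - (c : ℕ)) 0 c N (by omega)).mpr
          (W_zero.mpr (Fin.ext (by simp [hN])))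
        simpa using this
  | zero => exact W_zero.mpr rfl
  | add a b _ _ ha hb => exact W_add.mpr ⟨N, ha, hb⟩

lemma closedWalk_mem {A : Matrix (Fin n) (Fin n) ℝ} (hA : IsCompanion A)
    {N : Fin n} (hN : (N : ℕ) = n - 1) :
    ∀ l, W A l N N → l ∈ AddSubmonoid.closure (Lset A N) := by
  have hn : 0 < n := N.pos
  intro l
  induction l using Nat.strong_induction_on with
  | _ l ih =>
    intro hw
    match l, hw with
    | 0, _ => exact zero_mem _
    | (l' + 1), hw =>
      obtain ⟨c, hc, hw'⟩ := W_succ_left.mp hw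
      have hgen : n - (c : ℕ) ∈ Lset A N := ⟨c, hc, rfl⟩
      have hc1 : (c : ℕ) ≤ n - 1 := by have := c.isLt; omega
      set d := n - 1 - (c : ℕ) with hd
      rcases Nat.lt_or_ge l' d with hld | hld
      · -- impossible: walk from c of length l' < d cannot reach N
        have := (W_down hA l' c N (by omega)).mp hw'
        omega
      · have h2 : l' = (l' - d) + d := by omega
        rw [h2] at hw'
        have hw'' : W A (l' - d) N N := by
          have := (W_chain hA hn d (l' - d) c N (by omega)).mp hw'
          rwa [show (⟨n - 1, by omega⟩ : Fin n) = N from Fin.ext (by simp [hN])] at this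
        have hmem := ih (l' - d) (by omega) hw''
        have : l' + 1 = (n - (c : ℕ)) + (l' - d) := by omega
        rw [this]
        exact add_mem (AddSubmonoid.subset_closure hgen) hmem

lemma W_N_char {A : Matrix (Fin n) (Fin n) ℝ} (hA : IsCompanion A)
    {N : Fin n} (hN : (N : ℕ) = n - 1) (htr : A N N = 0) :
    ∀ l, 1 ≤ l → ∀ j : Fin n, (W A l N j ↔
      ∃ c : Fin n, A N c = 1 ∧ (c : ℕ) ≤ (j : ℕ) ∧
        ∃ s ∈ AddSubmonoid.closure (Lset A N), l = s + ((j : ℕ) + 1 - (c : ℕ))) := by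
  have hn : 0 < n := N.pos
  intro l
  induction l using Nat.strong_induction_on with
  | _ l ih =>
    intro hl j
    constructor
    · intro hw
      match l, hl, hw with
      | (l' + 1), _, hw =>
        obtain ⟨c0, hc0, hw'⟩ := W_succ_left.mp hw
        have hc0N : c0 ≠ N := fun h => by rw [h, htr] at hc0; norm_num at hc0
        have hc0v : (c0 : ℕ) < n - 1 := by
          have := c0.isLt
          have : (c0 : ℕ) ≠ n - 1 := fun h => hc0N (Fin.ext (by omega))
          omega
        set d := n - 1 - (c0 : ℕ) with hd
        rcases Nat.lt_or_ge ((c0 : ℕ) + l') n with hlt | hge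
        · rcases le_or_gt ((c0 : ℕ) + l') (n - 1) with hle | hgt
          · -- stays below N : deterministic
            have hj := (W_down hA l' c0 j hle).mp hw'
            exact ⟨c0, hc0, by omega, 0, zero_mem _, by omega⟩
          · omega
        · -- passes through N again
          have hld : d < l' := by omega
          have h2 : l' = (l' - d) + d := by omega
          rw [h2] at hw'
          have hw'' : W A (l' - d) N j := by
            have := (W_chain hA hn d (l' - d) c0 j (by omega)).mp hw'
            rwa [show (⟨n - 1, by omega⟩ : Fin n) = N from Fin.ext (by simp [hN])] at this
          rcases Nat.eq_zero_or_pos (l' - d) with h0 | hpos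
          · -- j = N, l = n - c0
            have : j = N := (W_zero.mp (h0 ▸ hw'')).symm
            refine ⟨c0, hc0, by omega, 0, zero_mem _, by omega⟩
          · obtain ⟨c, hc, hcj, s, hs, hrep⟩ := (ih (l' - d) (by omega) hpos j).mp hw''
            refine ⟨c, hc, hcj, s + (n - (c0 : ℕ)),
              add_mem hs (AddSubmonoid.subset_closure ⟨c0, hc0, rfl⟩), by omega⟩
    · rintro ⟨c, hc, hcj, s, hs, rfl⟩
      have hjv := j.isLt
      have h1 : (j : ℕ) + 1 - (c : ℕ) = ((j : ℕ) - (c : ℕ)) + 1 := by omega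
      refine W_add.mpr ⟨N, mem_closedWalk hA hN hs, ?_⟩
      rw [h1, W_succ_left]
      exact ⟨c, hc, (W_down hA _ c j (by omega)).mpr (by omega)⟩

end Stmt15Aux
namespace Stmt15Aux

variable {n : ℕ}

lemma elemCycle_iff {A : Matrix (Fin n) (Fin n) ℝ} (hn3 : 3 ≤ n) (hA : IsCompanion A)
    {N : Fin n} (hN : (N : ℕ) = n - 1) (htr : A N N = 0) (k : ℕ) :
    HasElemCycle A k ↔ k ∈ Lset A N := by
  constructor
  · rintro ⟨hk, c, hc0, hinj, he⟩
    -- k ≥ 2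
    have hk2 : 2 ≤ k := by
      by_contra h
      have hk1 : k = 1 := by omega
      subst hk1
      have he0 := he 0 (by omega)
      rw [hc0] at he0
      by_cases hcN : c 0 = N
      · rw [hcN, htr] at he0; norm_num at he0
      · have hlt : ((c 0 : Fin n) : ℕ) + 1 < n := by
          have := (c 0).isLt
          have : ((c 0 : Fin n) : ℕ) ≠ n - 1 := fun h' => hcN (Fin.ext (by omega))
          omega
        have := (hA.2 (c 0) (c 0) hlt).mp he0
        omega
    -- find a visit to N
    have hex : ∃ i0, i0 < k ∧ c i0 = N := by
      by_contra h
      push_neg at h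
      have hstep : ∀ i ≤ k, ((c i : Fin n) : ℕ) = ((c 0 : Fin n) : ℕ) + i := by
        intro i
        induction i with
        | zero => simp
        | succ i ih =>
            intro hik
            have hi : i < k := by omega
            have hiv := ih (by omega)
            have hlt : ((c i : Fin n) : ℕ) + 1 < n := by
              have := (c i).isLt
              have : ((c i : Fin n) : ℕ) ≠ n - 1 := fun h' => (h i hi) (Fin.ext (by omega))
              omega
            have := (hA.2 (c i) (c (i+1)) hlt).mp (he i hi)
            omega
      have h0 := hstep k (le_refl k)
      rw [hc0] at h0
      omega
    obtain ⟨i0, hi0k, hi0⟩ := hex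
    -- rotated walk
    set d : ℕ → Fin n := fun t => c ((i0 + t) % k) with hdef
    have hd0 : d 0 = N := by simp [hdef, Nat.mod_eq_of_lt hi0k, hi0]
    have hedge' : ∀ t, A (d t) (d (t + 1)) = 1 := by
      intro t
      have hu : (i0 + t) % k < k := Nat.mod_lt _ (by omega)
      have h1 : d t = c ((i0 + t) % k) := rfl
      have h2 : d (t + 1) = c (((i0 + t) % k) + 1) := by
        show c ((i0 + (t+1)) % k) = _
        have : (i0 + (t + 1)) % k = ((i0 + t) + 1) % k := by ring_nf
        rw [this, Nat.add_mod (i0 + t) 1 k, Nat.mod_eq_of_lt (show (1:ℕ) < k by omega)]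
        rcases Nat.lt_or_ge ((i0 + t) % k + 1) k with h | h
        · rw [Nat.mod_eq_of_lt h]
        · have : (i0 + t) % k + 1 = k := by omega
          rw [this, Nat.mod_self, ← hc0]
      rw [h1, h2]
      exact he _ hu
    have hdN : ∀ s, s < k → d s = N → s = 0 := by
      intro s hs hdsN
      have h1 : c ((i0 + s) % k) = c i0 := by rw [hi0]; exact hdsN
      have h2 : (i0 + s) % k = i0 := hinj _ _ (Nat.mod_lt _ (by omega)) hi0k h1
      have h3 : (i0 + s) % k = i0 % k := by rw [h2, Nat.mod_eq_of_lt hi0k]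
      have h4 : k ∣ s := by
        simpa using (Nat.modEq_iff_dvd' (Nat.le_add_right i0 s)).mp h3.symm
      rcases h4 with ⟨m, rfl⟩
      rcases Nat.eq_zero_or_pos m with rfl | hm
      · simp
      · exfalso; nlinarith
    set b : Fin n := d 1 with hbdef
    have hbne : b ≠ N := fun h => by have := hdN 1 (by omega) h; omega
    have hb : A N b = 1 := by rw [← hd0]; exact hedge' 0
    have hbval : (b : ℕ) ≤ n - 2 := by
      have := b.isLt
      have : (b : ℕ) ≠ n - 1 := fun h' => hbne (Fin.ext (by omega))
      omega
    set e := n - 1 - (b : ℕ) with hedefn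
    have he1 : 1 ≤ e := by omega
    have claim : ∀ s, 1 ≤ s → s ≤ e → s < k → ((d s : Fin n) : ℕ) = (b : ℕ) + s - 1 := by
      intro s
      induction s with
      | zero => omega
      | succ s ih =>
          intro _ hse hsk
          rcases Nat.eq_zero_or_pos s with rfl | hs1
          · simp [hbdef]
          · have hv := ih hs1 (by omega) (by omega)
            have hlt : ((d s : Fin n) : ℕ) + 1 < n := by omega
            have := (hA.2 (d s) (d (s+1)) hlt).mp (hedge' s)
            omega
    rcases Nat.lt_or_ge e k with hek | hke
    · -- e < k : cycle closes exactly at e + 1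
      have hde : ((d e : Fin n) : ℕ) = n - 2 := by
        have := claim e he1 (le_refl e) hek
        omega
      have hlt : ((d e : Fin n) : ℕ) + 1 < n := by omega
      have hval : ((d (e+1) : Fin n) : ℕ) = n - 1 := by
        have := (hA.2 (d e) (d (e+1)) hlt).mp (hedge' e)
        omega
      have hdN' : d (e + 1) = N := Fin.ext (by omega)
      have hke1 : k ≤ e + 1 := by
        by_contra h
        have := hdN (e+1) (by omega) hdN'
        omega
      exact ⟨b, hb, by omega⟩
    · -- k ≤ e : contradiction
      exfalso
      have hv := claim (k-1) (by omega) (by omega) (by omega)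
      have hlt : ((d (k-1) : Fin n) : ℕ) + 1 < n := by omega
      have heq : d ((k-1) + 1) = d k := by rw [show (k-1) + 1 = k by omega]
      have hdk : d k = N := by
        show c ((i0 + k) % k) = N
        rw [Nat.add_mod_right, Nat.mod_eq_of_lt hi0k, hi0]
      have := (hA.2 (d (k-1)) (d ((k-1)+1)) hlt).mp (hedge' (k-1))
      rw [heq, hdk, hN] at this
      omega
  · rintro ⟨b, hb, rfl⟩
    have hbne : b ≠ N := fun h => by rw [h, htr] at hb; norm_num at hb
    have hbval : (b : ℕ) ≤ n - 2 := by
      have := b.isLt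
      have : (b : ℕ) ≠ n - 1 := fun h' => hbne (Fin.ext (by omega))
      omega
    set k := n - (b : ℕ) with hkdef
    have hk2 : 2 ≤ k := by omega
    refine ⟨by omega, fun t => if h : 0 < t ∧ t < k then ⟨(b : ℕ) + t - 1, by omega⟩ else N, ?_, ?_, ?_⟩
    · simp [show ¬(0 < k ∧ k < k) by omega, show ¬(0 < 0 ∧ 0 < k) by omega]
    · intro i j hi hj hij
      by_cases h0i : 0 < i <;> by_cases h0j : 0 < j
      · simp only [dif_pos (And.intro h0i hi), dif_pos (And.intro h0j hj)] at hij
        have := congrArg Fin.val hij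
        simp at this
        omega
      · simp only [dif_pos (And.intro h0i hi), dif_neg (show ¬(0 < j ∧ j < k) by omega)] at hij
        have := congrArg Fin.val hij
        simp [hN] at this
        omega
      · simp only [dif_neg (show ¬(0 < i ∧ i < k) by omega), dif_pos (And.intro h0j hj)] at hij
        have := congrArg Fin.val hij
        simp [hN] at this
        omega
      · omega
    · intro i hi
      rcases Nat.eq_zero_or_pos i with rfl | h0i
      · simp only [dif_neg (show ¬(0 < 0 ∧ 0 < k) by omega), dif_pos (And.intro (by omega : 0 < 1) (by omega : 1 < k))]
        have : (⟨(b : ℕ) + 1 - 1, by omega⟩ : Fin n) = b := Fin.ext (by simp)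
        rw [this]; exact hb
      · rcases Nat.lt_or_ge (i + 1) k with hik | hik
        · simp only [dif_pos (And.intro h0i hi), dif_pos (And.intro (by omega : 0 < i + 1) hik)]
          refine (hA.2 _ _ (by simp; omega)).mpr (by simp; omega)
        · have hieq : i + 1 = k := by omega
          simp only [dif_pos (And.intro h0i hi), dif_neg (show ¬(0 < i + 1 ∧ i + 1 < k) by omega)]
          refine (hA.2 _ _ (by simp; omega)).mpr (by simp [hN]; omega)

end Stmt15Aux
theorem stmt15 {n : ℕ} (hn : 3 ≤ n) (A : Matrix (Fin n) (Fin n) ℝ)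
    (hA : IsCompanion A) (hP : _root_.IsPrimitive A)
    (h1 : A ⟨n - 1, by omega⟩ ⟨0, by omega⟩ = 1)
    (htr : A ⟨n - 1, by omega⟩ ⟨n - 1, by omega⟩ = 0)
    (hint : ∀ i : Fin n, 1 ≤ (i : ℕ) →
      (i : ℕ) ≤ runMax {m : ℕ | ∃ i' : Fin n, (i' : ℕ) = m ∧ A ⟨n - 1, by omega⟩ i' = 0} →
      A ⟨n - 1, by omega⟩ i = 0) :
    matExp A = n + frobNum {k : ℕ | HasElemCycle A k} +
      runMax {m : ℕ | ∃ i' : Fin n, (i' : ℕ) = m ∧ A ⟨n - 1, by omega⟩ i' = 0} := by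
  classical
  open Stmt15Aux in
  set N : Fin n := ⟨n - 1, by omega⟩ with hNdef
  have hN : (N : ℕ) = n - 1 := rfl
  have htr' : A N N = 0 := htr
  have h1' : A N ⟨0, by omega⟩ = 1 := h1
  have h01 := hA.1
  set Unat : Set ℕ := {m : ℕ | ∃ i' : Fin n, (i' : ℕ) = m ∧ A N i' = 0} with hUdef
  set RS : Set ℕ := {k : ℕ | ∃ a : ℕ, ∀ t < k, a + t ∈ Unat} with hRSdef
  set rm : ℕ := runMax Unat with hrmdef
  set Fb : ℕ := frobNum {k : ℕ | HasElemCycle A k} with hFbdef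
  set SCl : AddSubmonoid ℕ := AddSubmonoid.closure (Lset A N) with hSCldef
  have hcycset : {k : ℕ | HasElemCycle A k} = Lset A N :=
    Set.ext fun k => elemCycle_iff hn hA hN htr' k
  -- zero is not in Unat
  have h0U : (0 : ℕ) ∉ Unat := by
    rintro ⟨i', hi', hAi'⟩
    have : i' = ⟨0, by omega⟩ := Fin.ext (by simp; omega)
    rw [this, h1'] at hAi'
    norm_num at hAi'
  have hUlt : ∀ m ∈ Unat, m ≤ n - 1 := by
    rintro m ⟨i', hi', _⟩
    have := i'.isLt; omega
  -- RS is bounded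
  have hRSbd : ∀ k ∈ RS, k ≤ n - 1 := by
    rintro k ⟨a, ha⟩
    rcases Nat.eq_zero_or_pos k with rfl | hk
    · omega
    · have h0 := ha 0 hk
      have hk1 := ha (k - 1) (by omega)
      have ha1 : a ≠ 0 := by rintro rfl; exact h0U (by simpa using h0)
      have := hUlt _ hk1
      omega
  have hRSbdd : BddAbove RS := ⟨n - 1, fun k hk => hRSbd k hk⟩
  have hRS0 : (0 : ℕ) ∈ RS := ⟨0, fun t ht => by omega⟩
  have hrm_mem : rm ∈ RS := by
    rw [hrmdef]; exact Nat.sSup_mem ⟨0, hRS0⟩ hRSbdd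
  have hrm_ub : ∀ k ∈ RS, k ≤ rm := fun k hk => le_csSup hRSbdd hk
  have hrm1 : 1 ≤ rm := by
    refine hrm_ub 1 ⟨n - 1, fun t ht => ?_⟩
    have : t = 0 := by omega
    subst this
    exact ⟨N, by simp [hN], htr'⟩
  -- monotonicity of positivity
  have Emono : ∀ k, (∀ i j, 0 < (A ^ k) i j) → ∀ i j, 0 < (A ^ (k + 1)) i j := by
    intro k hk i j
    rw [pow_succ, Matrix.mul_apply]
    have hcol : ∃ t : Fin n, A t j = 1 := by
      rcases Nat.eq_zero_or_pos (j : ℕ) with hj | hj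
      · exact ⟨N, by rw [show j = ⟨0, by omega⟩ from Fin.ext (by simp; omega)]; exact h1'⟩
      · refine ⟨⟨(j : ℕ) - 1, by have := j.isLt; omega⟩, ?_⟩
        refine (hA.2 _ _ (by simp; have := j.isLt; omega)).mpr (by simp; omega)
    obtain ⟨t, ht⟩ := hcol
    refine Finset.sum_pos' (fun u _ => mul_nonneg (pow_entry_nonneg h01 k i u) (entry_nonneg h01 u j)) ⟨t, Finset.mem_univ t, ?_⟩
    rw [ht, mul_one]; exact hk i t
  have Eup : ∀ k l, k ≤ l → (∀ i j, 0 < (A ^ k) i j) → ∀ i j, 0 < (A ^ l) i j := by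
    intro k l hkl hk
    induction l, hkl using Nat.le_induction with
    | base => exact hk
    | succ l hl ih => exact Emono l ih
  -- primitivity gives two consecutive closed walk lengths
  obtain ⟨m0, hm0pos, hm0⟩ := hP
  have hm0S : m0 ∈ SCl :=
    closedWalk_mem hA hN m0 ((pow_pos_iff_W h01 m0 N N).mp (hm0 N N))
  have hm01S : m0 + 1 ∈ SCl :=
    closedWalk_mem hA hN (m0 + 1)
      ((pow_pos_iff_W h01 (m0 + 1) N N).mp (Emono m0 hm0 N N))
  -- cofiniteness of the numerical semigroup
  have hcof : ∀ l, m0 * m0 ≤ l → l ∈ SCl := by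
    intro l hl
    have hr : l % m0 < m0 := Nat.mod_lt _ hm0pos
    have hq : m0 ≤ l / m0 := (Nat.le_div_iff_mul_le hm0pos).mpr (by nlinarith)
    obtain ⟨X, hX⟩ : ∃ X, l / m0 = X + l % m0 := ⟨l / m0 - l % m0, by omega⟩
    have hdm := Nat.div_add_mod l m0
    have hrep : l = (l % m0) * (m0 + 1) + X * m0 := by
      rw [show (l % m0) * (m0 + 1) + X * m0 = m0 * (X + l % m0) + l % m0 from by ring, ← hX, hdm]
    rw [hrep]
    refine add_mem ?_ ?_
    · have := nsmul_mem hm01S (l % m0)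
      rwa [smul_eq_mul] at this
    · have := nsmul_mem hm0S X
      rwa [smul_eq_mul] at this
  -- Frobenius facts
  have hFbeq : Fb = sInf {Nc : ℕ | ∀ m, Nc ≤ m → m ∈ SCl} := by
    rw [hFbdef, frobNum, hSCldef, hcycset]
  have hFmem : ∀ m, Fb ≤ m → m ∈ SCl := by
    have : Fb ∈ {Nc : ℕ | ∀ m, Nc ≤ m → m ∈ SCl} := by
      rw [hFbeq]; exact Nat.sInf_mem ⟨m0 * m0, hcof⟩
    exact this
  have hSC2 : ∀ x ∈ SCl, x = 0 ∨ 2 ≤ x := by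
    intro x hx
    induction hx using AddSubmonoid.closure_induction with
    | mem y hy =>
        obtain ⟨c, hc, rfl⟩ := hy
        have hcN : c ≠ N := fun h => by rw [h, htr'] at hc; norm_num at hc
        have : (c : ℕ) ≠ n - 1 := fun h => hcN (Fin.ext (by omega))
        have := c.isLt
        omega
    | zero => left; rfl
    | add a b _ _ ha hb => omega
  have hF2 : 2 ≤ Fb := by
    by_contra h
    have h1m : (1 : ℕ) ∈ SCl := hFmem 1 (by omega)
    rcases hSC2 1 h1m with h' | h' <;> omega
  have hFgap : Fb - 1 ∉ SCl := by
    intro hcon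
    have hnotin : Fb - 1 ∉ {Nc : ℕ | ∀ m, Nc ≤ m → m ∈ SCl} := by
      rw [hFbeq]
      exact Nat.notMem_of_lt_sInf (by rw [← hFbeq]; omega)
    simp only [Set.mem_setOf_eq] at hnotin
    push_neg at hnotin
    obtain ⟨m, hm1, hm2⟩ := hnotin
    have : m < Fb := by by_contra h; exact hm2 (hFmem m (by omega))
    have : m = Fb - 1 := by omega
    exact hm2 (this ▸ hcon)
  -- rm ≤ n - 2
  have hrm_le : rm ≤ n - 2 := by
    by_contra h
    have hrmeq : rm = n - 1 := by
      have := hRSbd rm hrm_mem; omega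
    obtain ⟨a, ha⟩ := hrm_mem
    have ha1 : a ≠ 0 := by
      rintro rfl; exact h0U (by simpa using ha 0 (by omega))
    have halast := hUlt _ (ha (rm - 1) (by omega))
    have ha2 : a = 1 := by omega
    subst ha2
    have hgen0 : ∀ c : Fin n, A N c = 1 → (c : ℕ) = 0 := by
      intro c hc
      by_contra hc0
      have hcv : (c : ℕ) - 1 < rm := by have := c.isLt; omega
      obtain ⟨i', hi', hAi'⟩ := ha ((c : ℕ) - 1) hcv
      have : i' = c := Fin.ext (by omega)
      rw [this, hc] at hAi'
      norm_num at hAi'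
    have hdvd : ∀ x ∈ SCl, n ∣ x := by
      intro x hx
      induction hx using AddSubmonoid.closure_induction with
      | mem y hy =>
          obtain ⟨c, hc, rfl⟩ := hy
          rw [hgen0 c hc]
          simp
      | zero => exact dvd_zero n
      | add a b _ _ ha hb => exact dvd_add ha hb
    have d1 := hdvd m0 hm0S
    have d2 := hdvd (m0 + 1) hm01S
    have hdvd1 : n ∣ 1 := by simpa using Nat.dvd_sub d2 d1
    have := Nat.le_of_dvd one_pos hdvd1
    omega
  -- the "gap at most rm" property
  have hgapj : ∀ j : Fin n, ∃ c : Fin n, A N c = 1 ∧ (c : ℕ) ≤ (j : ℕ) ∧ (j : ℕ) - (c : ℕ) ≤ rm := by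
    intro j
    set P : ℕ → Prop := fun c => ∃ c' : Fin n, (c' : ℕ) = c ∧ A N c' = 1 with hPdef
    have hP0 : P 0 := ⟨⟨0, by omega⟩, rfl, h1'⟩
    set cs := Nat.findGreatest P (j : ℕ) with hcs
    have hPcs : P cs := Nat.findGreatest_spec (Nat.zero_le _) hP0
    have hcsle : cs ≤ (j : ℕ) := Nat.findGreatest_le _
    obtain ⟨c', hc'v, hc'1⟩ := hPcs
    refine ⟨c', hc'1, by omega, ?_⟩
    refine hrm_ub ((j : ℕ) - cs) ⟨cs + 1, fun t ht => ?_⟩ |>.trans_eq' (by omega)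
    have hv : cs + 1 + t ≤ (j : ℕ) := by omega
    have hvn : cs + 1 + t < n := by have := j.isLt; omega
    have hnP : ¬ P (cs + 1 + t) := Nat.findGreatest_is_greatest (by omega) hv
    refine ⟨⟨cs + 1 + t, hvn⟩, rfl, ?_⟩
    rcases h01 N ⟨cs + 1 + t, hvn⟩ with h | h
    · exact h
    · exact absurd ⟨⟨cs + 1 + t, hvn⟩, rfl, h⟩ hnP
  -- all long walks from N exist
  have hWlong : ∀ l, Fb + rm + 1 ≤ l → ∀ j : Fin n, W A l N j := by
    intro l hl j
    obtain ⟨c, hc1, hcle, hcrm⟩ := hgapj j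
    refine (W_N_char hA hN htr' l (by omega) j).mpr
      ⟨c, hc1, hcle, l - ((j : ℕ) + 1 - (c : ℕ)), hFmem _ (by have := j.isLt; omega), by have := j.isLt; omega⟩
  -- positivity at T
  set T : ℕ := n + Fb + rm with hTdef
  have hTpos : ∀ i j, 0 < (A ^ T) i j := by
    intro i j
    rw [pow_pos_iff_W h01]
    have hd : (i : ℕ) + (n - 1 - (i : ℕ)) = n - 1 := by have := i.isLt; omega
    have hT : T = (T - (n - 1 - (i : ℕ))) + (n - 1 - (i : ℕ)) := by have := i.isLt; omega
    rw [hT]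
    refine (W_chain hA (by omega) _ _ i j hd).mpr ?_
    have hbig : Fb + rm + 1 ≤ T - (n - 1 - (i : ℕ)) := by have := i.isLt; omega
    have := hWlong _ hbig j
    rwa [show N = (⟨n - 1, by omega⟩ : Fin n) from Fin.ext rfl] at this
  -- the zero entry at T - 1
  have hjm : rm < n := by omega
  have hzero : ¬ W A (T - 1) ⟨0, by omega⟩ ⟨rm, hjm⟩ := by
    intro hw
    have hT1 : T - 1 = (Fb + rm) + (n - 1) := by omega
    rw [hT1] at hw
    have hw' : W A (Fb + rm) N ⟨rm, hjm⟩ := by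
      have := (W_chain hA (by omega) (n - 1) (Fb + rm) ⟨0, by omega⟩ ⟨rm, hjm⟩ (by simp)).mp hw
      rwa [show (⟨n - 1, by omega⟩ : Fin n) = N from Fin.ext rfl] at this
    obtain ⟨c, hc1, hcle, s, hs, hrep⟩ :=
      (W_N_char hA hN htr' (Fb + rm) (by omega) ⟨rm, hjm⟩).mp hw'
    simp only [Fin.val_mk] at hcle hrep
    have hc0 : (c : ℕ) = 0 := by
      by_contra hc0
      have := hint c (by omega) (by rw [hrmdef] at hcle ⊢; omega)
      rw [this] at hc1
      norm_num at hc1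
    have hsF : s = Fb - 1 := by omega
    exact hFgap (hsF ▸ hs)
  -- conclusion
  have hTmem : T ∈ {m : ℕ | 0 < m ∧ ∀ i j, 0 < (A ^ m) i j} := ⟨by omega, hTpos⟩
  have hlb : ∀ x ∈ {m : ℕ | 0 < m ∧ ∀ i j, 0 < (A ^ m) i j}, T ≤ x := by
    rintro x ⟨hx0, hxpos⟩
    by_contra hlt
    have hxle : x ≤ T - 1 := by omega
    have := Eup x (T - 1) hxle hxpos ⟨0, by omega⟩ ⟨rm, hjm⟩
    exact hzero ((pow_pos_iff_W h01 _ _ _).mp this)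
  show matExp A = T
  rw [matExp]
  exact le_antisymm (Nat.sInf_le hTmem) (le_csInf ⟨T, hTmem⟩ hlb)
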